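/- In the independent (self-similar) case, if P_X has an atom then P_X is a Dirac mass: there exists c∈ℝ with φ(c)=c for every φ∈S and P_X=δ_c. -/

import Mathlib

open MeasureTheory ProbabilityTheory Filter Topology

set_option linter.unusedSectionVars false
section AuxShift

variable {E : Type*} [Countable E] [MeasurableSpace E] [MeasurableSingletonClass E]

/-- iterated left shift -/
def shiftn (m : ℕ) (ω : ℕ → E) : ℕ → E := fun k => ω (k + m)

@[simp] lemma shiftn_apply (m : ℕ) (ω : ℕ → E) (k : ℕ) : shiftn m ω k = ω (k + m) := rfl

@[simp] lemma shiftn_zero (ω : ℕ → E) : shiftn 0 ω = ω := rfl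

lemma measurable_shiftn (m : ℕ) : Measurable (shiftn (E := E) m) :=
  measurable_pi_iff.mpr fun _ => measurable_pi_apply _

/-- elementary cylinder sets -/
def cylSet (s : Finset ℕ) (e : ℕ → E) : Set (ℕ → E) := {ω | ∀ i ∈ s, ω i = e i}

lemma measurableSet_cylSet (s : Finset ℕ) (e : ℕ → E) : MeasurableSet (cylSet s e) := by
  have : cylSet s e = ⋂ i ∈ s, (fun ω : ℕ → E => ω i) ⁻¹' {e i} := by
    ext ω; simp [cylSet]
  rw [this]
  exact MeasurableSet.biInter s.countable_toSet
    (fun i _ => (measurable_pi_apply i) (measurableSet_singleton _))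

lemma isPiSystem_cyl :
    IsPiSystem {A : Set (ℕ → E) | ∃ s e, A = cylSet s e} := by
  rintro A ⟨s, e, rfl⟩ B ⟨t, f, rfl⟩ hne
  obtain ⟨ω₀, h1, h2⟩ := hne
  refine ⟨s ∪ t, ω₀, ?_⟩
  ext ω
  simp only [cylSet, Set.mem_inter_iff, Set.mem_setOf_eq, Finset.mem_union] at *
  constructor
  · rintro ⟨hs, ht⟩ i hi
    rcases hi with hi | hi
    · rw [hs i hi, ← h1 i hi]
    · rw [ht i hi, ← h2 i hi]
  · intro h
    exact ⟨fun i hi => (h i (Or.inl hi)).trans (h1 i hi),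
           fun i hi => (h i (Or.inr hi)).trans (h2 i hi)⟩

lemma generateFrom_cyl :
    (MeasurableSpace.pi : MeasurableSpace (ℕ → E)) =
      MeasurableSpace.generateFrom {A : Set (ℕ → E) | ∃ s e, A = cylSet s e} := by
  refine le_antisymm ?_ ?_
  · -- pi ≤ generateFrom C
    show (⨆ n : ℕ, MeasurableSpace.comap (fun ω : ℕ → E => ω n) ‹MeasurableSpace E›) ≤ _
    refine iSup_le fun n => ?_
    refine measurable_iff_comap_le.mp ?_
    intro B _
    have hBeq : (fun ω : ℕ → E => ω n) ⁻¹' B = ⋃ x ∈ B, cylSet {n} (fun _ => x) := by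
      ext ω; simp [cylSet]
    rw [hBeq]
    exact MeasurableSet.biUnion B.to_countable
      (fun x _ => MeasurableSpace.measurableSet_generateFrom ⟨{n}, fun _ => x, rfl⟩)
  · refine MeasurableSpace.generateFrom_le ?_
    rintro A ⟨s, e, rfl⟩
    exact measurableSet_cylSet s e

end AuxShift

/-- **Independent (self-similar) case.** On `Ω = E^ℕ` with the left shift `T` and a product
measure `P = ν^{⊗ℕ}` (formalized by: the coordinates are independent, each with law `ν`),
if `b` and `r` depend only on the first coordinate and the law of
`X(ω) = ∑ r_n(ω) b(T^n ω)` has an atom, then it is a Dirac mass `δ_c` at a common fixed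
point `c` of all the affine maps `φ_ω : y ↦ b(ω) + r(ω) y`. -/
theorem independent_atom_implies_dirac
    {E : Type*} [Countable E] [MeasurableSpace E] [MeasurableSingletonClass E]
    (ν : Measure E) [IsProbabilityMeasure ν] (hν : ∀ e : E, 0 < ν {e})
    (P : Measure (ℕ → E)) [IsProbabilityMeasure P]
    (hindep : iIndepFun
      (fun n (ω : ℕ → E) => ω n) P)
    (hlaw : ∀ n : ℕ, P.map (fun ω : ℕ → E => ω n) = ν)
    (b0 r0 : E → ℝ) (hr0 : ∀ e, 0 < r0 e)
    (hbInt : Integrable (fun ω : ℕ → E => b0 (ω 0)) P)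
    (hlogInt : Integrable (fun ω : ℕ → E => Real.log (r0 (ω 0))) P)
    (hlogNeg : ∫ ω : ℕ → E, Real.log (r0 (ω 0)) ∂P < 0)
    (X : (ℕ → E) → ℝ) (hX : Measurable X)
    (hXsum : ∀ᵐ ω ∂P, HasSum
      (fun n : ℕ => (∏ k ∈ Finset.range n, r0 (ω k)) * b0 (ω n)) (X ω))
    (ha : ∃ a : ℝ, 0 < P.map X {a}) :
    ∃ c : ℝ, (∀ e : E, b0 e + r0 e * c = c) ∧ P.map X = Measure.dirac c := by
  classical
  haveI : IsProbabilityMeasure (P.map X) := Measure.isProbabilityMeasure_map hX.aemeasurable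
  -- measure of elementary cylinders
  have hcyl : ∀ (g : ℕ → ℕ), Function.Injective g → ∀ (s : Finset ℕ) (e : ℕ → E),
      P {ω | ∀ i ∈ s, ω (g i) = e i} = ∏ i ∈ s, ν {e i} := by
    intro g hg s e
    set sets : ℕ → Set E :=
      fun j => if j ∈ s.image g then ({e (Function.invFun g j)} : Set E) else Set.univ
      with hsets
    have hsgi : ∀ i ∈ s, sets (g i) = {e i} := by
      intro i hi
      rw [hsets]
      simp only []
      rw [if_pos (Finset.mem_image.mpr ⟨i, hi, rfl⟩), Function.leftInverse_invFun hg i]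
    have key := hindep.measure_inter_preimage_eq_mul (S := s.image g) (sets := sets)
      (fun j _ => (sets j).to_countable.measurableSet)
    have hseteq : (⋂ j ∈ s.image g, (fun ω : ℕ → E => ω j) ⁻¹' sets j)
        = {ω | ∀ i ∈ s, ω (g i) = e i} := by
      ext ω
      simp only [Set.mem_iInter, Set.mem_preimage, Set.mem_setOf_eq]
      constructor
      · intro h i hi
        have h2 := h (g i) (Finset.mem_image.mpr ⟨i, hi, rfl⟩)
        rw [hsgi i hi] at h2
        exact h2
      · intro h j hj
        obtain ⟨i, hi, rfl⟩ := Finset.mem_image.mp hj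
        rw [hsgi i hi]
        exact h i hi
    rw [hseteq] at key
    rw [key, Finset.prod_image (fun i _ j _ h => hg h)]
    refine Finset.prod_congr rfl fun i hi => ?_
    rw [hsgi i hi, ← hlaw (g i),
      Measure.map_apply (measurable_pi_apply (g i)) (measurableSet_singleton _)]
  -- the shift preserves P
  have hshift : ∀ m : ℕ, P.map (shiftn m) = P := by
    intro m
    haveI : IsProbabilityMeasure (P.map (shiftn m)) :=
      Measure.isProbabilityMeasure_map (measurable_shiftn m).aemeasurable
    refine ext_of_generate_finite _ generateFrom_cyl isPiSystem_cyl ?_ (by simp)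
    rintro A ⟨s, e, rfl⟩
    rw [Measure.map_apply (measurable_shiftn m) (measurableSet_cylSet s e)]
    have h1 : shiftn m ⁻¹' (cylSet s e) = {ω : ℕ → E | ∀ i ∈ s, ω (i + m) = e i} := by
      ext ω; simp [cylSet, shiftn]
    have h2 : (cylSet s e : Set (ℕ → E)) = {ω : ℕ → E | ∀ i ∈ s, ω (id i) = e i} := rfl
    rw [h1, h2, hcyl (· + m) (add_left_injective m) s e, hcyl id Function.injective_id s e]
  -- the basic recursion
  have hrec : ∀ᵐ ω ∂P, X ω = b0 (ω 0) + r0 (ω 0) * X (shiftn 1 ω) := by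
    have h2 : ∀ᵐ ω ∂P, HasSum
        (fun n => (∏ k ∈ Finset.range n, r0 (shiftn 1 ω k)) * b0 (shiftn 1 ω n))
        (X (shiftn 1 ω)) := by
      exact ae_of_ae_map
        (p := fun ω : ℕ → E => HasSum
          (fun n => (∏ k ∈ Finset.range n, r0 (ω k)) * b0 (ω n)) (X ω))
        (measurable_shiftn 1).aemeasurable (by rw [hshift 1]; exact hXsum)
    filter_upwards [hXsum, h2] with ω h1 h2
    set f : ℕ → ℝ := fun n => (∏ k ∈ Finset.range n, r0 (ω k)) * b0 (ω n) with hf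
    have h3 : HasSum (fun n => f (n + 1)) (r0 (ω 0) * X (shiftn 1 ω)) := by
      have hfe : (fun n => f (n + 1)) =
          fun n => r0 (ω 0) * ((∏ k ∈ Finset.range n, r0 (shiftn 1 ω k)) * b0 (shiftn 1 ω n)) := by
        funext n
        simp only [hf, shiftn_apply]
        rw [Finset.prod_range_succ']
        ring
      rw [hfe]
      exact h2.mul_left _
    have h4 : HasSum (fun n => f (n + 1)) (X ω - f 0) := by
      refine (hasSum_nat_add_iff 1).mpr ?_
      simpa using h1
    have h5 := h3.unique h4
    have hf0 : f 0 = b0 (ω 0) := by simp [hf]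
    rw [hf0] at h5
    linarith
  -- independence of the first coordinate and X ∘ shift
  have hi : iIndep (fun n => MeasurableSpace.comap (fun ω : ℕ → E => ω n)
      (inferInstance : MeasurableSpace E)) P := hindep
  have h_le : ∀ n : ℕ, MeasurableSpace.comap (fun ω : ℕ → E => ω n)
      (inferInstance : MeasurableSpace E) ≤ (MeasurableSpace.pi) :=
    fun n => (measurable_pi_apply n).comap_le
  have hXT1meas : Measurable (X ∘ shiftn (E := E) 1) := hX.comp (measurable_shiftn 1)
  have hIndep : IndepFun (fun ω : ℕ → E => ω 0) (X ∘ shiftn 1) P := by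
    have hgrp := indep_biSup_compl h_le hi ({0} : Set ℕ)
    have hgrp2 := indep_of_indep_of_le_left hgrp
      (le_of_eq (iSup_singleton (f := fun n => MeasurableSpace.comap
        (fun ω : ℕ → E => ω n) (inferInstance : MeasurableSpace E))).symm)
    refine indep_of_indep_of_le_right hgrp2 ?_
    set m' : MeasurableSpace (ℕ → E) := ⨆ n ∈ ({0}ᶜ : Set ℕ), MeasurableSpace.comap
      (fun ω : ℕ → E => ω n) (inferInstance : MeasurableSpace E) with hm'
    have hsm : @Measurable (ℕ → E) (ℕ → E) m' MeasurableSpace.pi (shiftn 1) := by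
      refine (@measurable_pi_iff (ℕ → E) ℕ (fun _ => E) m' _ (shiftn 1)).mpr fun k => ?_
      refine Measurable.of_comap_le ?_
      rw [hm']
      exact le_iSup₂ (f := fun n (_ : n ∈ ({0}ᶜ : Set ℕ)) => MeasurableSpace.comap
        (fun ω : ℕ → E => ω n) (inferInstance : MeasurableSpace E)) (k + 1) (by simp)
    exact measurable_iff_comap_le.mp (hX.comp hsm)
  have hXT : P.map (X ∘ shiftn 1) = P.map X := by
    rw [← Measure.map_map hX (measurable_shiftn 1), hshift 1]
  -- the self-similarity identity for atoms
  have hAtom : ∀ a : ℝ, P.map X {a} = ∑' e : E, ν {e} * P.map X {(a - b0 e) / r0 e} := by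
    intro a
    rw [Measure.map_apply hX (measurableSet_singleton _)]
    have hST : (X ⁻¹' {a} : Set (ℕ → E)) =ᵐ[P]
        {ω : ℕ → E | b0 (ω 0) + r0 (ω 0) * X (shiftn 1 ω) = a} := by
      filter_upwards [hrec] with ω h
      change (X ω = a) = (b0 (ω 0) + r0 (ω 0) * X (shiftn 1 ω) = a)
      rw [h]
    have hU : {ω : ℕ → E | b0 (ω 0) + r0 (ω 0) * X (shiftn 1 ω) = a}
        = ⋃ e : E, ((fun ω : ℕ → E => ω 0) ⁻¹' {e} ∩
            (X ∘ shiftn 1) ⁻¹' {(a - b0 e) / r0 e}) := by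
      ext ω
      simp only [Set.mem_setOf_eq, Set.mem_iUnion, Set.mem_inter_iff, Set.mem_preimage,
        Set.mem_singleton_iff, Function.comp_apply]
      constructor
      · intro h
        refine ⟨ω 0, rfl, ?_⟩
        rw [eq_div_iff (hr0 (ω 0)).ne']
        linarith
      · rintro ⟨e, rfl, h2⟩
        rw [h2]
        field_simp [(hr0 (ω 0)).ne']
        ring
    rw [measure_congr hST, hU, measure_iUnion ?_ ?_]
    · exact tsum_congr fun e => by
        rw [hIndep.measure_inter_preimage_eq_mul {e} {(a - b0 e) / r0 e}
            (measurableSet_singleton _) (measurableSet_singleton _),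
          ← Measure.map_apply (measurable_pi_apply 0) (measurableSet_singleton _), hlaw 0,
          ← Measure.map_apply hXT1meas (measurableSet_singleton _), hXT]
    · intro e e' hee
      refine Set.disjoint_left.mpr ?_
      rintro ω ⟨h1, -⟩ ⟨h2, -⟩
      exact hee (h1.symm.trans h2)
    · exact fun e => ((measurable_pi_apply 0) (measurableSet_singleton _)).inter
        (hXT1meas (measurableSet_singleton _))
  -- finding the maximal atom and the common fixed point
  obtain ⟨a0, ha0⟩ := ha
  have hfin : {a : ℝ | P.map X {a0} ≤ P.map X {a}}.Finite := by
    refine Measure.finite_const_le_meas_of_disjoint_iUnion (P.map X) ha0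
      (fun a => measurableSet_singleton a)
      (fun a b hab => Set.disjoint_singleton.mpr hab) ?_
    rw [Set.iUnion_of_singleton]
    exact measure_ne_top _ _
  have ha0F : a0 ∈ hfin.toFinset := hfin.mem_toFinset.mpr (by simp only [Set.mem_setOf_eq]; exact le_rfl)
  obtain ⟨cm, hcmF, hcmmax⟩ := hfin.toFinset.exists_max_image
    (fun a => P.map X {a}) ⟨a0, ha0F⟩
  have hmax : ∀ a : ℝ, P.map X {a} ≤ P.map X {cm} := by
    intro a
    by_cases haF : a ∈ hfin.toFinset
    · exact hcmmax a haF
    · have hlt : ¬ (P.map X {a0} ≤ P.map X {a}) :=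
        fun hle => haF (hfin.mem_toFinset.mpr hle)
      exact (le_of_not_ge hlt).trans (hcmmax a0 ha0F)
  have hm0 : 0 < P.map X {cm} := ha0.trans_le (hmax a0)
  have hAsub : {a : ℝ | P.map X {a} = P.map X {cm}}
      ⊆ {a : ℝ | P.map X {a0} ≤ P.map X {a}} := by
    intro a hA
    simp only [Set.mem_setOf_eq] at hA ⊢
    rw [hA]
    exact hmax a0
  have hAfin := hfin.subset hAsub
  have hFAne : hAfin.toFinset.Nonempty := ⟨cm, hAfin.mem_toFinset.mpr rfl⟩
  have htsum1 : ∑' e : E, ν {e} = 1 := by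
    have h1 : ν (⋃ e : E, {e}) = ∑' e : E, ν {e} :=
      measure_iUnion (fun a b hab => Set.disjoint_singleton.mpr hab)
        (fun e => measurableSet_singleton e)
    rw [Set.iUnion_of_singleton, measure_univ] at h1
    exact h1.symm
  have hclosed : ∀ (e : E) (a : ℝ), a ∈ hAfin.toFinset →
      (a - b0 e) / r0 e ∈ hAfin.toFinset := by
    intro e a haFA
    have haA : P.map X {a} = P.map X {cm} := hAfin.mem_toFinset.mp haFA
    refine hAfin.mem_toFinset.mpr ?_
    show P.map X {(a - b0 e) / r0 e} = P.map X {cm}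
    by_contra hne
    have hlt : P.map X {(a - b0 e) / r0 e} < P.map X {cm} := lt_of_le_of_ne (hmax _) hne
    have hlt2 : ∑' e' : E, ν {e'} * P.map X {(a - b0 e') / r0 e'}
        < ∑' e' : E, ν {e'} * P.map X {cm} := by
      refine ENNReal.tsum_lt_tsum (i := e) ?_ ?_ ?_
      · rw [← hAtom a, haA]
        exact measure_ne_top _ _
      · exact fun e' => mul_le_mul_right (hmax _) _
      · exact ENNReal.mul_lt_mul_right (hν e).ne' (measure_ne_top _ _) hlt
    rw [← hAtom a, haA, ENNReal.tsum_mul_right, htsum1, one_mul] at hlt2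
    exact lt_irrefl _ hlt2
  set c := hAfin.toFinset.max' hFAne with hcdef
  have hcFA : c ∈ hAfin.toFinset := hAfin.toFinset.max'_mem hFAne
  have hfix : ∀ e : E, b0 e + r0 e * c = c := by
    intro e
    have hmapsto : ∀ a ∈ hAfin.toFinset, (a - b0 e) / r0 e ∈ hAfin.toFinset :=
      fun a ha => hclosed e a ha
    have hinj : ∀ a₁ ∈ hAfin.toFinset, ∀ a₂ ∈ hAfin.toFinset,
        (a₁ - b0 e) / r0 e = (a₂ - b0 e) / r0 e → a₁ = a₂ := by
      intro a₁ _ a₂ _ hab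
      field_simp [(hr0 e).ne'] at hab
      linarith
    have hsurj := Finset.surj_on_of_inj_on_of_card_le
      (fun a (_ : a ∈ hAfin.toFinset) => (a - b0 e) / r0 e)
      (fun a ha => hmapsto a ha) (fun a₁ a₂ h₁ h₂ h => hinj a₁ h₁ a₂ h₂ h) le_rfl
    have h1 : (c - b0 e) / r0 e ≤ c := hAfin.toFinset.le_max' _ (hmapsto c hcFA)
    obtain ⟨a, haFA, hac⟩ := hsurj c hcFA
    have h2 : a ≤ c := hAfin.toFinset.le_max' a haFA
    have h3 : (a - b0 e) / r0 e ≤ (c - b0 e) / r0 e := by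
      refine (div_le_div_iff_of_pos_right (hr0 e)).mpr ?_
      linarith
    have hac' : c = (a - b0 e) / r0 e := hac
    have h4 : (c - b0 e) / r0 e = c :=
      le_antisymm h1 (le_trans (le_of_eq hac') h3)
    rw [div_eq_iff (hr0 e).ne'] at h4
    linarith
  have hcpos : 0 < P.map X {c} := by
    have hc : P.map X {c} = P.map X {cm} := hAfin.mem_toFinset.mp hcFA
    rw [hc]
    exact hm0
  -- the iterated recursion
  have hrecT : ∀ᵐ ω ∂P, ∀ n : ℕ,
      X (shiftn n ω) = b0 (ω n) + r0 (ω n) * X (shiftn (n + 1) ω) := by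
    rw [ae_all_iff]
    intro n
    have hn := ae_of_ae_map
      (p := fun ω : ℕ → E => X ω = b0 (ω 0) + r0 (ω 0) * X (shiftn 1 ω))
      (measurable_shiftn (E := E) n).aemeasurable (by rw [hshift n]; exact hrec)
    filter_upwards [hn] with ω h
    have h1 : shiftn n ω 0 = ω n := by simp
    have h2 : shiftn 1 (shiftn n ω) = shiftn (n + 1) ω := by
      funext k
      simp only [shiftn_apply]
      congr 1
      omega
    rw [h1, h2] at h
    exact h
  have hrecn : ∀ᵐ ω ∂P, ∀ n : ℕ,
      X ω - c = (∏ k ∈ Finset.range n, r0 (ω k)) * (X (shiftn n ω) - c) := by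
    filter_upwards [hrecT] with ω h
    intro n
    induction n with
    | zero => simp
    | succ n ih =>
      have key : X (shiftn n ω) - c = r0 (ω n) * (X (shiftn (n + 1) ω) - c) := by
        rw [h n]
        have := hfix (ω n)
        ring_nf
        linarith
      rw [Finset.prod_range_succ, ih, key]
      ring
  -- the event {X = c} coincides a.e. with a tail event
  have hBiff : ∀ᵐ ω ∂P, ∀ n : ℕ, (X ω = c ↔ X (shiftn n ω) = c) := by
    filter_upwards [hrecn] with ω h
    intro n
    have hprod : 0 < ∏ k ∈ Finset.range n, r0 (ω k) :=
      Finset.prod_pos fun k _ => hr0 (ω k)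
    constructor
    · intro hc0
      have h0 : (0 : ℝ) = (∏ k ∈ Finset.range n, r0 (ω k)) * (X (shiftn n ω) - c) := by
        rw [← h n, hc0]
        ring
      have := (mul_eq_zero.mp h0.symm).resolve_left hprod.ne'
      linarith
    · intro hc0
      have := h n
      rw [hc0] at this
      simp at this
      linarith
  set t₀ : Set (ℕ → E) :=
    ⋂ n : ℕ, ⋃ m : ℕ, ⋃ (_ : n ≤ m), shiftn m ⁻¹' (X ⁻¹' {c}) with ht₀def
  -- t₀ is a tail event
  have ht_tail : MeasurableSet[Filter.limsup (fun n => MeasurableSpace.comap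
      (fun ω : ℕ → E => ω n) (inferInstance : MeasurableSpace E)) atTop] t₀ := by
    rw [limsup_eq_iInf_iSup_of_nat]
    refine MeasurableSpace.measurableSet_iInf.mpr fun n => ?_
    set m' : MeasurableSpace (ℕ → E) := ⨆ i, ⨆ (_ : i ≥ n), MeasurableSpace.comap
      (fun ω : ℕ → E => ω i) (inferInstance : MeasurableSpace E) with hm'
    have hTnB : ∀ m : ℕ, n ≤ m → MeasurableSet[m'] (shiftn m ⁻¹' (X ⁻¹' {c})) := by
      intro m hm
      have hsm : @Measurable (ℕ → E) (ℕ → E) m' MeasurableSpace.pi (shiftn m) := by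
        refine (@measurable_pi_iff (ℕ → E) ℕ (fun _ => E) m' _ (shiftn m)).mpr fun k => ?_
        refine Measurable.of_comap_le ?_
        rw [hm']
        exact le_iSup₂ (f := fun i (_ : i ≥ n) => MeasurableSpace.comap
          (fun ω : ℕ → E => ω i) (inferInstance : MeasurableSpace E)) (k + m)
          (by omega)
      exact hsm (hX (measurableSet_singleton c))
    have ht₀eq : t₀ = ⋂ j : ℕ, ⋃ m : ℕ, ⋃ (_ : n + j ≤ m), shiftn m ⁻¹' (X ⁻¹' {c}) := by
      rw [ht₀def]
      ext ω
      simp only [Set.mem_iInter, Set.mem_iUnion]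
      constructor
      · intro h j
        obtain ⟨m, hm, hmem⟩ := h (n + j)
        exact ⟨m, hm, hmem⟩
      · intro h j
        obtain ⟨m, hm, hmem⟩ := h j
        exact ⟨m, by omega, hmem⟩
    rw [ht₀eq]
    exact MeasurableSet.iInter fun j => MeasurableSet.iUnion fun m =>
      MeasurableSet.iUnion fun hm => hTnB m (by omega)
  have h01 : P t₀ = 0 ∨ P t₀ = 1 :=
    measure_zero_or_one_of_measurableSet_limsup_atTop h_le hi ht_tail
  -- t₀ coincides a.e. with {X = c}
  have ht₀B : P t₀ = P (X ⁻¹' {c}) := by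
    refine measure_congr ?_
    filter_upwards [hBiff] with ω h
    have hiff : ω ∈ t₀ ↔ ω ∈ X ⁻¹' {c} := by
      rw [ht₀def]
      simp only [Set.mem_iInter, Set.mem_iUnion, Set.mem_preimage, Set.mem_singleton_iff]
      constructor
      · intro hh
        obtain ⟨m, _, hmem⟩ := hh 0
        exact (h m).mpr hmem
      · intro hh n
        exact ⟨n, le_rfl, (h n).mp hh⟩
    exact eq_iff_iff.mpr hiff
  have hPB : P (X ⁻¹' {c}) = P.map X {c} :=
    (Measure.map_apply hX (measurableSet_singleton c)).symm
  have hone : P.map X {c} = 1 := by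
    rcases h01 with h0 | h1
    · rw [ht₀B, hPB] at h0
      exact absurd h0 hcpos.ne'
    · rw [ht₀B, hPB] at h1
      exact h1
  -- conclusion
  refine ⟨c, hfix, ?_⟩
  ext A hA
  by_cases hcA : c ∈ A
  · rw [Measure.dirac_apply' c hA, Set.indicator_of_mem hcA, Pi.one_apply]
    refine le_antisymm prob_le_one ?_
    rw [← hone]
    exact measure_mono (Set.singleton_subset_iff.mpr hcA)
  · rw [Measure.dirac_apply' c hA, Set.indicator_of_notMem hcA]
    have hcompl : P.map X ({c}ᶜ) = 0 := by
      have := measure_compl (μ := P.map X) (measurableSet_singleton c) (measure_ne_top _ _)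
      rw [hone, measure_univ] at this
      simpa using this
    refine measure_mono_null ?_ hcompl
    intro x hx
    simp only [Set.mem_compl_iff, Set.mem_singleton_iff]
    rintro rfl
    exact hcA hx
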